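/- Let N ≥ 2 and λ > 0. Assume w : ℝ^N → ℝ is continuously differentiable, and there exist σ > 0 and ρ₀ > 0 such that both w(z) and ‖∇w(z)‖ are bounded by σ |z|^{−(N−1)/2} e^{−√λ|z|} for all |z| ≥ ρ₀. Assume f : ℝ → ℝ is continuous, f(t) = 0 for t ≤ 0, f ≥ 0, and |f(t)| ≤ D(|t|^{p₁} + |t|^{p₂}) for all t, where D > 0 and 1 < p₁ ≤ p₂. Assume that for all a, b ∈ ℝ^N the identity ∫_{ℝ^N} ( ∇w(x−a)·∇w(x−b) + λ w(x−a) w(x−b) ) dx = (1/2) ∫_{ℝ^N} f(w(x−a)) w(x−b) dx + (1/2) ∫_{ℝ^N} f(w(x−b)) w(x−a) dx holds. Assume ξ : ℝ^N → [0,1] is a C¹ function with ξ ≡ 0 on the ball B_ρ(0) and ξ ≡ 1 on ℝ^N \ B_{2ρ}(0), for some ρ > 0; for θ ∈ ℝ^N and R > 0 set Φ^{Rθ}(x) := ξ(x) w(x − Rθ). Let x₀, y ∈ ℝ^N with |x₀| = 1 and |y − x₀| = 2. Then lim_{R→∞} R^{(N−1)/2} e^{2R√λ} | ∫_{ℝ^N}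 ( ∇Φ^{Ry}(x)·∇Φ^{Rx₀}(x) + λ Φ^{Ry}(x) Φ^{Rx₀}(x) ) dx − (1/2) ∫_{ℝ^N} f(w(x−Ry)) w(x−Rx₀) dx − (1/2) ∫_{ℝ^N} f(w(x−Rx₀)) w(x−Ry) dx | = 0. -/

import Mathlib

open MeasureTheory Filter Metric RealInnerProductSpace
-- Lemma A: (1+s)^r * exp(-(k*s)) bounded
lemma aux_exp_poly_bound (r k : ℝ) (hr : 0 ≤ r) (hk : 0 < k) :
    ∃ c : ℝ, 0 < c ∧ ∀ s : ℝ, 0 ≤ s → (1 + s) ^ r * Real.exp (-(k * s)) ≤ c := by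
  have h := tendsto_rpow_mul_exp_neg_mul_atTop_nhds_zero r k hk
  have h1 : ∀ᶠ x in atTop, x ^ r * Real.exp (-k * x) ≤ 1 := by
    filter_upwards [h.eventually (eventually_le_nhds (by norm_num : (0:ℝ) < 1))] with x hx
    exact hx
  obtain ⟨x₀, hx₀⟩ := h1.exists_forall_of_atTop
  refine ⟨max (Real.exp k) ((max x₀ 1) ^ r) + 1, by positivity, fun s hs => ?_⟩
  rcases le_or_gt (max x₀ 1) (1 + s) with hcase | hcase
  · have h2 := hx₀ (1 + s) (le_trans (le_max_left _ _) hcase)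
    have he : Real.exp (-(k * s)) = Real.exp k * Real.exp (-k * (1 + s)) := by
      rw [← Real.exp_add]; ring_nf
    have hpos : (0:ℝ) < 1 + s := by linarith
    calc (1 + s) ^ r * Real.exp (-(k * s))
        = Real.exp k * ((1 + s) ^ r * Real.exp (-k * (1 + s))) := by rw [he]; ring
      _ ≤ Real.exp k * 1 := by
          apply mul_le_mul_of_nonneg_left h2 (Real.exp_pos k).le
      _ ≤ max (Real.exp k) ((max x₀ 1) ^ r) + 1 := by
          rw [mul_one]; exact le_trans (le_max_left _ _) (by linarith [le_max_left (Real.exp k) ((max x₀ 1) ^ r)])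
  · have h3 : (1 + s) ^ r ≤ (max x₀ 1) ^ r :=
      Real.rpow_le_rpow (by linarith) hcase.le hr
    have h4 : Real.exp (-(k * s)) ≤ 1 := Real.exp_le_one_iff.mpr (by nlinarith)
    calc (1 + s) ^ r * Real.exp (-(k * s)) ≤ (max x₀ 1) ^ r * 1 := by
          apply mul_le_mul h3 h4 (Real.exp_pos _).le (Real.rpow_nonneg (by positivity) r)
      _ ≤ max (Real.exp k) ((max x₀ 1) ^ r) + 1 := by
          rw [mul_one]; linarith [le_max_right (Real.exp k) ((max x₀ 1) ^ r)]

-- Lemma B: global polynomial bound from exponential decay outside a ball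
lemma aux_global_bound {N : ℕ} (g : EuclideanSpace ℝ (Fin N) → ℝ) (hg : Continuous g)
    (σ ρ₀ α k r : ℝ) (hσ : 0 < σ) (hρ₀ : 0 < ρ₀) (hα : 0 ≤ α) (hk : 0 < k) (hr : 0 ≤ r)
    (hdecay : ∀ z, ρ₀ ≤ ‖z‖ → |g z| ≤ σ * ‖z‖ ^ (-α) * Real.exp (-(k * ‖z‖))) :
    ∃ C : ℝ, 0 < C ∧ ∀ z, |g z| ≤ C * (1 + ‖z‖) ^ (-r) := by
  obtain ⟨c, hc, hcb⟩ := aux_exp_poly_bound r k hr hk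
  obtain ⟨M, hM⟩ := (isCompact_closedBall (0 : EuclideanSpace ℝ (Fin N)) ρ₀).exists_bound_of_continuousOn hg.continuousOn
  refine ⟨max (σ * ρ₀ ^ (-α) * c) ((max M 0 + 1) * (1 + ρ₀) ^ r), lt_max_iff.mpr (Or.inl (by positivity)), fun z => ?_⟩
  have hz1 : (0:ℝ) < 1 + ‖z‖ := by positivity
  have hrp : (0:ℝ) < (1 + ‖z‖) ^ (-r) := Real.rpow_pos_of_pos hz1 _
  rcases le_or_gt ρ₀ ‖z‖ with hcase | hcase
  · have hzpos : (0:ℝ) < ‖z‖ := lt_of_lt_of_le hρ₀ hcase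
    have h1 : ‖z‖ ^ (-α) ≤ ρ₀ ^ (-α) :=
      Real.rpow_le_rpow_of_nonpos hρ₀ hcase (neg_nonpos.mpr hα)
    have h2 : Real.exp (-(k * ‖z‖)) ≤ c * (1 + ‖z‖) ^ (-r) := by
      have hb := hcb ‖z‖ (norm_nonneg z)
      have hp : (0:ℝ) < (1 + ‖z‖) ^ r := Real.rpow_pos_of_pos hz1 r
      rw [Real.rpow_neg hz1.le, ← div_eq_mul_inv, le_div_iff₀ hp]
      nlinarith [hb]
    calc |g z| ≤ σ * ‖z‖ ^ (-α) * Real.exp (-(k * ‖z‖)) := hdecay z hcase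
      _ ≤ σ * ρ₀ ^ (-α) * (c * (1 + ‖z‖) ^ (-r)) := by
          apply mul_le_mul (by
            apply mul_le_mul_of_nonneg_left h1 hσ.le) h2 (Real.exp_pos _).le (by positivity)
      _ = (σ * ρ₀ ^ (-α) * c) * (1 + ‖z‖) ^ (-r) := by ring
      _ ≤ _ := mul_le_mul_of_nonneg_right (le_max_left _ _) hrp.le
  · have hMz : |g z| ≤ max M 0 := by
      have := hM z (by simpa [Metric.mem_closedBall] using hcase.le)
      exact le_trans (le_of_eq (Real.norm_eq_abs _).symm) (le_max_of_le_left this)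
    have h3 : (1 + ρ₀) ^ (-r) ≤ (1 + ‖z‖) ^ (-r) :=
      Real.rpow_le_rpow_of_nonpos hz1 (by linarith) (neg_nonpos.mpr hr)
    have h4 : (1:ℝ) = (1 + ρ₀) ^ r * (1 + ρ₀) ^ (-r) := by
      rw [← Real.rpow_add (by positivity)]; simp
    calc |g z| ≤ max M 0 + 1 := by linarith [hMz]
      _ = ((max M 0 + 1) * (1 + ρ₀) ^ r) * (1 + ρ₀) ^ (-r) := by rw [mul_assoc, ← h4, mul_one]
      _ ≤ ((max M 0 + 1) * (1 + ρ₀) ^ r) * (1 + ‖z‖) ^ (-r) := by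
          apply mul_le_mul_of_nonneg_left h3 (by positivity)
      _ ≤ _ := mul_le_mul_of_nonneg_right (le_max_right _ _) hrp.le

-- Lemma C: integrability from polynomial decay of order N+1 around a center b
lemma aux_integrable_of_decay {N : ℕ} (u : EuclideanSpace ℝ (Fin N) → ℝ)
    (hu : AEStronglyMeasurable u volume) (C : ℝ) (b : EuclideanSpace ℝ (Fin N))
    (hb : ∀ x, |u x| ≤ C * (1 + ‖x - b‖) ^ (-((N : ℝ) + 1))) : Integrable u := by
  have h1 : Integrable (fun x : EuclideanSpace ℝ (Fin N) => C * (1 + ‖x‖) ^ (-((N : ℝ) + 1))) := by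
    apply Integrable.const_mul
    apply integrable_one_add_norm
    rw [finrank_euclideanSpace_fin]
    linarith
  have h2 := h1.comp_sub_right b
  exact h2.mono' hu (Eventually.of_forall fun x => by
    simpa [Real.norm_eq_abs] using hb x)

-- gradient of ξ * (w ∘ translate)
lemma aux_gradient_mul_translate {N : ℕ} (w ξ : EuclideanSpace ℝ (Fin N) → ℝ)
    (hw : ContDiff ℝ 1 w) (hξ : ContDiff ℝ 1 ξ) (a x : EuclideanSpace ℝ (Fin N)) :
    gradient (fun x' => ξ x' * w (x' - a)) x
      = ξ x • gradient w (x - a) + w (x - a) • gradient ξ x := by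
  have hwd : HasFDerivAt (fun x' => w (x' - a)) (fderiv ℝ w (x - a)) x := by
    have h1 := (hw.differentiable one_ne_zero (x - a)).hasFDerivAt
    have h2 : HasFDerivAt (fun x' : EuclideanSpace ℝ (Fin N) => x' - a)
        (ContinuousLinearMap.id ℝ (EuclideanSpace ℝ (Fin N))) x := hasFDerivAt_sub_const a
    exact h1.comp x h2
  have hξd : HasFDerivAt ξ (fderiv ℝ ξ x) x := (hξ.differentiable one_ne_zero x).hasFDerivAt
  have hmul : HasFDerivAt (fun x' => ξ x' * w (x' - a)) _ x := hξd.mul hwd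
  rw [gradient, hmul.fderiv, map_add]
  rw [LinearIsometryEquiv.map_smul, LinearIsometryEquiv.map_smul]
  rfl

lemma aux_continuous_gradient {N : ℕ} (w : EuclideanSpace ℝ (Fin N) → ℝ)
    (hw : ContDiff ℝ 1 w) : Continuous (gradient w) := by
  exact (InnerProductSpace.toDual ℝ _).symm.continuous.comp (hw.continuous_fderiv one_ne_zero)

noncomputable def auxG {N : ℕ} (lam : ℝ) (w ξ : EuclideanSpace ℝ (Fin N) → ℝ)
    (a b x : EuclideanSpace ℝ (Fin N)) : ℝ :=
  (⟪ξ x • gradient w (x - a) + w (x - a) • gradient ξ x,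
      ξ x • gradient w (x - b) + w (x - b) • gradient ξ x⟫ +
    lam * ((ξ x * w (x - a)) * (ξ x * w (x - b)))) -
  (⟪gradient w (x - a), gradient w (x - b)⟫ + lam * (w (x - a) * w (x - b)))

set_option maxHeartbeats 2000000 in
theorem stmt6 (N : ℕ) (hN : 2 ≤ N) (lam : ℝ) (hlam : 0 < lam)
    (w : EuclideanSpace ℝ (Fin N) → ℝ) (hw : ContDiff ℝ 1 w)
    (σ ρ₀ : ℝ) (hσ : 0 < σ) (hρ₀ : 0 < ρ₀)
    (hwdecay : ∀ z : EuclideanSpace ℝ (Fin N), ρ₀ ≤ ‖z‖ →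
      |w z| ≤ σ * ‖z‖ ^ (-(((N : ℝ) - 1) / 2)) * Real.exp (-(Real.sqrt lam * ‖z‖)) ∧
      ‖gradient w z‖ ≤ σ * ‖z‖ ^ (-(((N : ℝ) - 1) / 2)) * Real.exp (-(Real.sqrt lam * ‖z‖)))
    (f : ℝ → ℝ) (D p₁ p₂ : ℝ) (hD : 0 < D) (hp₁ : 1 < p₁) (hp : p₁ ≤ p₂)
    (hfcont : Continuous f) (hf0 : ∀ t ≤ (0:ℝ), f t = 0) (hfnn : ∀ t, 0 ≤ f t)
    (hfgrowth : ∀ t : ℝ, |f t| ≤ D * (|t| ^ p₁ + |t| ^ p₂))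
    (hident : ∀ a b : EuclideanSpace ℝ (Fin N),
      (∫ x, (⟪gradient w (x - a), gradient w (x - b)⟫ + lam * (w (x - a) * w (x - b)))) =
        (1 / 2) * (∫ x, f (w (x - a)) * w (x - b)) +
          (1 / 2) * (∫ x, f (w (x - b)) * w (x - a)))
    (ρ : ℝ) (hρ : 0 < ρ)
    (ξ : EuclideanSpace ℝ (Fin N) → ℝ) (hξ : ContDiff ℝ 1 ξ)
    (hξ01 : ∀ x, ξ x ∈ Set.Icc (0:ℝ) 1)
    (hξ0 : ∀ x ∈ Metric.ball (0 : EuclideanSpace ℝ (Fin N)) ρ, ξ x = 0)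
    (hξ1 : ∀ x ∉ Metric.ball (0 : EuclideanSpace ℝ (Fin N)) (2 * ρ), ξ x = 1)
    (x₀ y : EuclideanSpace ℝ (Fin N)) (hx₀ : ‖x₀‖ = 1) (hy : ‖y - x₀‖ = 2) :
    Tendsto (fun R : ℝ =>
        R ^ (((N : ℝ) - 1) / 2) * Real.exp (2 * R * Real.sqrt lam) *
          |(∫ x, (⟪gradient (fun x' => ξ x' * w (x' - R • y)) x,
              gradient (fun x' => ξ x' * w (x' - R • x₀)) x⟫ +
              lam * ((ξ x * w (x - R • y)) * (ξ x * w (x - R • x₀))))) -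
            (1 / 2) * (∫ x, f (w (x - R • y)) * w (x - R • x₀)) -
            (1 / 2) * (∫ x, f (w (x - R • x₀)) * w (x - R • y))|) atTop (nhds 0) := by
  classical
  set k : ℝ := Real.sqrt lam with hkdef
  have hk : 0 < k := Real.sqrt_pos.mpr hlam
  set α : ℝ := ((N : ℝ) - 1) / 2 with hαdef
  have hN2 : (2:ℝ) ≤ (N:ℝ) := by exact_mod_cast hN
  have hα : 0 < α := by simp only [hαdef]; linarith
  -- global polynomial bounds
  obtain ⟨C₁, hC₁, hC₁b⟩ := aux_global_bound w hw.continuous σ ρ₀ α k ((N:ℝ)+1) hσ hρ₀ hα.le hk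
    (by positivity) (fun z hz => (hwdecay z hz).1)
  obtain ⟨C₂, hC₂, hC₂b⟩ := aux_global_bound (fun z => ‖gradient w z‖)
    ((aux_continuous_gradient w hw).norm) σ ρ₀ α k ((N:ℝ)+1) hσ hρ₀ hα.le hk (by positivity)
    (fun z hz => by simpa [abs_norm] using (hwdecay z hz).2)
  set C₀ : ℝ := max C₁ C₂ with hC₀def
  have hC₀ : 0 < C₀ := lt_max_of_lt_left hC₁
  have hwb : ∀ z : EuclideanSpace ℝ (Fin N), |w z| ≤ C₀ * (1 + ‖z‖) ^ (-((N:ℝ)+1)) := fun z =>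
    (hC₁b z).trans (mul_le_mul_of_nonneg_right (le_max_left _ _) (by positivity))
  have hgb : ∀ z : EuclideanSpace ℝ (Fin N), ‖gradient w z‖ ≤ C₀ * (1 + ‖z‖) ^ (-((N:ℝ)+1)) := fun z => by
    have := (hC₂b z).trans (mul_le_mul_of_nonneg_right (le_max_right C₁ C₂)
      (by positivity : (0:ℝ) ≤ (1 + ‖z‖) ^ (-((N:ℝ)+1))))
    simpa [abs_norm] using this
  have hPle1 : ∀ z : EuclideanSpace ℝ (Fin N), (1 + ‖z‖) ^ (-((N:ℝ)+1)) ≤ 1 := fun z =>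
    Real.rpow_le_one_of_one_le_of_nonpos (by linarith [norm_nonneg z]) (neg_nonpos.mpr (by positivity))
  have hPnn : ∀ z : EuclideanSpace ℝ (Fin N), (0:ℝ) ≤ (1 + ‖z‖) ^ (-((N:ℝ)+1)) := fun z =>
    Real.rpow_nonneg (by linarith [norm_nonneg z]) _
  have hgc := aux_continuous_gradient w hw
  have hI0int : ∀ a b : EuclideanSpace ℝ (Fin N),
      Integrable (fun x => (⟪gradient w (x - a), gradient w (x - b)⟫ +
        lam * (w (x - a) * w (x - b)))) := by
    intro a b
    have h1 : Continuous fun x : EuclideanSpace ℝ (Fin N) => gradient w (x - a) :=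
      hgc.comp (continuous_id.sub continuous_const)
    have h2 : Continuous fun x : EuclideanSpace ℝ (Fin N) => gradient w (x - b) :=
      hgc.comp (continuous_id.sub continuous_const)
    have h3 : Continuous fun x : EuclideanSpace ℝ (Fin N) => w (x - a) :=
      hw.continuous.comp (continuous_id.sub continuous_const)
    have h4 : Continuous fun x : EuclideanSpace ℝ (Fin N) => w (x - b) :=
      hw.continuous.comp (continuous_id.sub continuous_const)
    apply aux_integrable_of_decay _
      (((h1.inner h2).add (continuous_const.mul (h3.mul h4))).aestronglyMeasurable)
      (C₀ * C₀ * (1 + lam)) b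
    intro x
    set Pa := (1 + ‖x - a‖) ^ (-((N:ℝ)+1)) with hPa
    set Pb := (1 + ‖x - b‖) ^ (-((N:ℝ)+1)) with hPb
    have e1 : ‖gradient w (x - a)‖ ≤ C₀ := by
      refine (hgb (x - a)).trans ?_
      calc C₀ * Pa ≤ C₀ * 1 := mul_le_mul_of_nonneg_left (hPle1 _) hC₀.le
        _ = C₀ := mul_one _
    have e2 : ‖gradient w (x - b)‖ ≤ C₀ * Pb := hgb (x - b)
    have e3 : |w (x - a)| ≤ C₀ := by
      refine (hwb (x - a)).trans ?_
      calc C₀ * Pa ≤ C₀ * 1 := mul_le_mul_of_nonneg_left (hPle1 _) hC₀.le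
        _ = C₀ := mul_one _
    have e4 : |w (x - b)| ≤ C₀ * Pb := hwb (x - b)
    have hia : |⟪gradient w (x - a), gradient w (x - b)⟫| ≤ C₀ * (C₀ * Pb) := by
      refine (abs_real_inner_le_norm _ _).trans ?_
      exact mul_le_mul e1 e2 (norm_nonneg _) hC₀.le
    have hib : |lam * (w (x - a) * w (x - b))| ≤ lam * (C₀ * (C₀ * Pb)) := by
      rw [abs_mul, abs_of_pos hlam, abs_mul]
      refine mul_le_mul_of_nonneg_left ?_ hlam.le
      exact mul_le_mul e3 e4 (abs_nonneg _) hC₀.le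
    calc |⟪gradient w (x - a), gradient w (x - b)⟫ + lam * (w (x - a) * w (x - b))|
        ≤ |⟪gradient w (x - a), gradient w (x - b)⟫| + |lam * (w (x - a) * w (x - b))| :=
          abs_add_le _ _
      _ ≤ C₀ * (C₀ * Pb) + lam * (C₀ * (C₀ * Pb)) := add_le_add hia hib
      _ = C₀ * C₀ * (1 + lam) * Pb := by ring
  have hξgc := aux_continuous_gradient ξ hξ
  have hG0 : ∀ a : EuclideanSpace ℝ (Fin N), ∀ b : EuclideanSpace ℝ (Fin N),
      ∀ x ∉ closedBall (0 : EuclideanSpace ℝ (Fin N)) (2 * ρ), auxG lam w ξ a b x = 0 := by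
    intro a b x hx
    have hxn : 2 * ρ < ‖x‖ := by
      simpa [mem_closedBall, dist_zero_right, not_le] using hx
    have hξx : ξ x = 1 := hξ1 x (by simp only [mem_ball, dist_zero_right, not_lt]; exact hxn.le)
    have hmax : IsLocalMax ξ x :=
      Filter.Eventually.of_forall fun z => by rw [hξx]; exact (hξ01 z).2
    have hgrad0 : gradient ξ x = 0 := by
      rw [gradient, hmax.fderiv_eq_zero, map_zero]
    simp [auxG, hξx, hgrad0]
  have hGcont : ∀ a b : EuclideanSpace ℝ (Fin N), Continuous (auxG lam w ξ a b) := by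
    intro a b
    have h1 : Continuous fun x : EuclideanSpace ℝ (Fin N) => gradient w (x - a) :=
      hgc.comp (continuous_id.sub continuous_const)
    have h2 : Continuous fun x : EuclideanSpace ℝ (Fin N) => gradient w (x - b) :=
      hgc.comp (continuous_id.sub continuous_const)
    have h3 : Continuous fun x : EuclideanSpace ℝ (Fin N) => w (x - a) :=
      hw.continuous.comp (continuous_id.sub continuous_const)
    have h4 : Continuous fun x : EuclideanSpace ℝ (Fin N) => w (x - b) :=
      hw.continuous.comp (continuous_id.sub continuous_const)
    unfold auxG
    exact ((((hξ.continuous.smul h1).add (h3.smul hξgc)).inner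
      ((hξ.continuous.smul h2).add (h4.smul hξgc))).add
        (continuous_const.mul ((hξ.continuous.mul h3).mul (hξ.continuous.mul h4)))).sub
      ((h1.inner h2).add (continuous_const.mul (h3.mul h4)))
  have hGint : ∀ a b : EuclideanSpace ℝ (Fin N), Integrable (auxG lam w ξ a b) := fun a b =>
    (hGcont a b).integrable_of_hasCompactSupport
      (HasCompactSupport.intro (isCompact_closedBall _ _) (hG0 a b))
  have main_eq : ∀ a b : EuclideanSpace ℝ (Fin N),
      (∫ x, (⟪gradient (fun x' => ξ x' * w (x' - a)) x,
          gradient (fun x' => ξ x' * w (x' - b)) x⟫ +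
          lam * ((ξ x * w (x - a)) * (ξ x * w (x - b))))) -
        (1 / 2) * (∫ x, f (w (x - a)) * w (x - b)) -
        (1 / 2) * (∫ x, f (w (x - b)) * w (x - a)) =
      ∫ x in closedBall (0 : EuclideanSpace ℝ (Fin N)) (2 * ρ), auxG lam w ξ a b x := by
    intro a b
    have hsplit : (fun x : EuclideanSpace ℝ (Fin N) =>
        (⟪gradient (fun x' => ξ x' * w (x' - a)) x,
          gradient (fun x' => ξ x' * w (x' - b)) x⟫ +
          lam * ((ξ x * w (x - a)) * (ξ x * w (x - b))))) =
        fun x => auxG lam w ξ a b x + (⟪gradient w (x - a), gradient w (x - b)⟫ +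
          lam * (w (x - a) * w (x - b))) := by
      funext x
      rw [aux_gradient_mul_translate w ξ hw hξ a x, aux_gradient_mul_translate w ξ hw hξ b x]
      unfold auxG
      ring
    rw [hsplit, integral_add (hGint a b) (hI0int a b), hident a b,
      ← setIntegral_eq_integral_of_forall_compl_eq_zero (hG0 a b)]
    ring
  simp only [main_eq]
  obtain ⟨M, hM⟩ := (isCompact_closedBall (0 : EuclideanSpace ℝ (Fin N))
    (2 * ρ)).exists_bound_of_continuousOn hξgc.continuousOn
  set M' : ℝ := max M 0 + 1 with hM'def
  have hM'nn : 0 ≤ M' := by positivity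
  have hM' : ∀ x ∈ closedBall (0 : EuclideanSpace ℝ (Fin N)) (2 * ρ), ‖gradient ξ x‖ ≤ M' :=
    fun x hx => le_trans (hM x hx) (by simp only [hM'def]; nlinarith [le_max_left M (0:ℝ)])
  set K : ℝ := (1 + M') ^ 2 + 1 + 2 * lam with hKdef
  have hK : 0 < K := by positivity
  set V : ℝ := (volume (closedBall (0 : EuclideanSpace ℝ (Fin N)) (2 * ρ))).toReal with hVdef
  have hV : 0 ≤ V := ENNReal.toReal_nonneg
  set Cst : ℝ := V * K * σ ^ 2 * Real.exp (4 * k * ρ) * (2:ℝ) ^ (2 * α) with hCstdef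
  apply squeeze_zero' (g := fun R => Cst * R ^ (-α))
  · filter_upwards [eventually_ge_atTop (0:ℝ)] with R hR
    positivity
  · filter_upwards [eventually_ge_atTop (max (4 * ρ) (2 * ρ + ρ₀ + 1))] with R hR
    have hR1 : 4 * ρ ≤ R := le_trans (le_max_left _ _) hR
    have hR2 : 2 * ρ + ρ₀ + 1 ≤ R := le_trans (le_max_right _ _) hR
    have hRpos : 0 < R := by linarith
    have hsub : 0 < R - 2 * ρ := by linarith
    have hρ₀sub : ρ₀ ≤ R - 2 * ρ := by linarith
    have hhalf : R / 2 ≤ R - 2 * ρ := by linarith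
    have hy1 : 1 ≤ ‖y‖ := by
      have h := norm_sub_le y x₀
      rw [hy, hx₀] at h
      linarith
    set B : ℝ := σ * (R - 2 * ρ) ^ (-α) * Real.exp (-(k * (R - 2 * ρ))) with hBdef
    have hBpos : 0 < B := by
      have := Real.rpow_pos_of_pos hsub (-α)
      positivity
    have hwB : ∀ z : EuclideanSpace ℝ (Fin N), R - 2 * ρ ≤ ‖z‖ →
        |w z| ≤ B ∧ ‖gradient w z‖ ≤ B := by
      intro z hz
      obtain ⟨hw1, hw2⟩ := hwdecay z (le_trans hρ₀sub hz)
      have hm : σ * ‖z‖ ^ (-α) * Real.exp (-(k * ‖z‖)) ≤ B := by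
        rw [hBdef]
        have e1 : ‖z‖ ^ (-α) ≤ (R - 2 * ρ) ^ (-α) :=
          Real.rpow_le_rpow_of_nonpos hsub hz (neg_nonpos.mpr hα.le)
        have e2 : Real.exp (-(k * ‖z‖)) ≤ Real.exp (-(k * (R - 2 * ρ))) := by
          apply Real.exp_le_exp.mpr
          nlinarith
        exact mul_le_mul (mul_le_mul_of_nonneg_left e1 hσ.le) e2 (Real.exp_pos _).le
          (by positivity)
      exact ⟨le_trans hw1 hm, le_trans hw2 hm⟩
    have hnorm : ∀ x ∈ closedBall (0 : EuclideanSpace ℝ (Fin N)) (2 * ρ),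
        R - 2 * ρ ≤ ‖x - R • y‖ ∧ R - 2 * ρ ≤ ‖x - R • x₀‖ := by
      intro x hx
      have hxle : ‖x‖ ≤ 2 * ρ := by simpa [mem_closedBall, dist_zero_right] using hx
      have hny : ‖R • y‖ = R * ‖y‖ := by
        rw [norm_smul, Real.norm_eq_abs, abs_of_pos hRpos]
      have hnx₀ : ‖R • x₀‖ = R := by
        rw [norm_smul, Real.norm_eq_abs, abs_of_pos hRpos, hx₀, mul_one]
      constructor
      · calc R - 2 * ρ ≤ R * ‖y‖ - ‖x‖ := by nlinarith
          _ = ‖R • y‖ - ‖x‖ := by rw [hny]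
          _ ≤ ‖R • y - x‖ := norm_sub_norm_le _ _
          _ = ‖x - R • y‖ := norm_sub_rev _ _
      · calc R - 2 * ρ ≤ R - ‖x‖ := by linarith
          _ = ‖R • x₀‖ - ‖x‖ := by rw [hnx₀]
          _ ≤ ‖R • x₀ - x‖ := norm_sub_norm_le _ _
          _ = ‖x - R • x₀‖ := norm_sub_rev _ _
    have hGbound : ∀ x ∈ closedBall (0 : EuclideanSpace ℝ (Fin N)) (2 * ρ),
        ‖auxG lam w ξ (R • y) (R • x₀) x‖ ≤ K * B ^ 2 := by
      intro x hx
      obtain ⟨hna, hnb⟩ := hnorm x hx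
      obtain ⟨ha1, ha2⟩ := hwB _ hna
      obtain ⟨hb1, hb2⟩ := hwB _ hnb
      have hξx0 := (hξ01 x).1
      have hξx1 := (hξ01 x).2
      have hMx := hM' x hx
      have hξabs : |ξ x| ≤ 1 := abs_le.mpr ⟨by linarith, hξx1⟩
      have hA : ‖ξ x • gradient w (x - R • y) + w (x - R • y) • gradient ξ x‖ ≤ B * (1 + M') := by
        refine (norm_add_le _ _).trans ?_
        rw [norm_smul, norm_smul, Real.norm_eq_abs, Real.norm_eq_abs]
        have t1 : |ξ x| * ‖gradient w (x - R • y)‖ ≤ 1 * B :=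
          mul_le_mul hξabs ha2 (norm_nonneg _) zero_le_one
        have t2 : |w (x - R • y)| * ‖gradient ξ x‖ ≤ B * M' :=
          mul_le_mul ha1 hMx (norm_nonneg _) hBpos.le
        have : B * (1 + M') = 1 * B + B * M' := by ring
        linarith
      have hB' : ‖ξ x • gradient w (x - R • x₀) + w (x - R • x₀) • gradient ξ x‖ ≤ B * (1 + M') := by
        refine (norm_add_le _ _).trans ?_
        rw [norm_smul, norm_smul, Real.norm_eq_abs, Real.norm_eq_abs]
        have t1 : |ξ x| * ‖gradient w (x - R • x₀)‖ ≤ 1 * B :=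
          mul_le_mul hξabs hb2 (norm_nonneg _) zero_le_one
        have t2 : |w (x - R • x₀)| * ‖gradient ξ x‖ ≤ B * M' :=
          mul_le_mul hb1 hMx (norm_nonneg _) hBpos.le
        have : B * (1 + M') = 1 * B + B * M' := by ring
        linarith
      have i1 : |⟪ξ x • gradient w (x - R • y) + w (x - R • y) • gradient ξ x,
          ξ x • gradient w (x - R • x₀) + w (x - R • x₀) • gradient ξ x⟫| ≤ (B * (1 + M')) ^ 2 := by
        refine (abs_real_inner_le_norm _ _).trans ?_
        rw [sq]
        exact mul_le_mul hA hB' (norm_nonneg _) (by positivity)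
      have i2 : |⟪gradient w (x - R • y), gradient w (x - R • x₀)⟫| ≤ B ^ 2 := by
        refine (abs_real_inner_le_norm _ _).trans ?_
        rw [sq]
        exact mul_le_mul ha2 hb2 (norm_nonneg _) hBpos.le
      have i3 : |(ξ x * w (x - R • y)) * (ξ x * w (x - R • x₀))| ≤ B ^ 2 := by
        rw [abs_mul, abs_mul, abs_mul, sq]
        have t1 : |ξ x| * |w (x - R • y)| ≤ B := by
          have := mul_le_mul hξabs ha1 (abs_nonneg _) zero_le_one
          linarith [this]
        have t2 : |ξ x| * |w (x - R • x₀)| ≤ B := by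
          have := mul_le_mul hξabs hb1 (abs_nonneg _) zero_le_one
          linarith [this]
        exact mul_le_mul t1 t2 (by positivity) hBpos.le
      have i4 : |w (x - R • y) * w (x - R • x₀)| ≤ B ^ 2 := by
        rw [abs_mul, sq]
        exact mul_le_mul ha1 hb1 (abs_nonneg _) hBpos.le
      rw [Real.norm_eq_abs]
      unfold auxG
      have habs1 := abs_sub (⟪ξ x • gradient w (x - R • y) + w (x - R • y) • gradient ξ x,
          ξ x • gradient w (x - R • x₀) + w (x - R • x₀) • gradient ξ x⟫ +
          lam * ((ξ x * w (x - R • y)) * (ξ x * w (x - R • x₀))))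
        (⟪gradient w (x - R • y), gradient w (x - R • x₀)⟫ +
          lam * (w (x - R • y) * w (x - R • x₀)))
      have habs2 := abs_add_le (⟪ξ x • gradient w (x - R • y) + w (x - R • y) • gradient ξ x,
          ξ x • gradient w (x - R • x₀) + w (x - R • x₀) • gradient ξ x⟫)
        (lam * ((ξ x * w (x - R • y)) * (ξ x * w (x - R • x₀))))
      have habs3 := abs_add_le (⟪gradient w (x - R • y), gradient w (x - R • x₀)⟫)
        (lam * (w (x - R • y) * w (x - R • x₀)))
      rw [abs_mul, abs_of_pos hlam] at habs2 habs3
      have m3 : lam * |(ξ x * w (x - R • y)) * (ξ x * w (x - R • x₀))| ≤ lam * B ^ 2 :=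
        mul_le_mul_of_nonneg_left i3 hlam.le
      have m4 : lam * |w (x - R • y) * w (x - R • x₀)| ≤ lam * B ^ 2 :=
        mul_le_mul_of_nonneg_left i4 hlam.le
      have hKexp : K * B ^ 2 = (B * (1 + M')) ^ 2 + B ^ 2 + 2 * (lam * B ^ 2) := by
        rw [hKdef]; ring
      linarith
    have hIbound : |∫ x in closedBall (0 : EuclideanSpace ℝ (Fin N)) (2 * ρ),
        auxG lam w ξ (R • y) (R • x₀) x| ≤ K * B ^ 2 * V := by
      rw [← Real.norm_eq_abs]
      exact norm_setIntegral_le_of_norm_le_const measure_closedBall_lt_top hGbound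
    have hexp : Real.exp (2 * R * k) * (Real.exp (-(k * (R - 2 * ρ)))) ^ 2 =
        Real.exp (4 * k * ρ) := by
      rw [sq, ← Real.exp_add, ← Real.exp_add]
      congr 1
      ring
    have e1 : (R / 2) ^ (-α) = R ^ (-α) * 2 ^ α := by
      rw [Real.div_rpow hRpos.le (by norm_num : (0:ℝ) ≤ 2),
        Real.rpow_neg (by norm_num : (0:ℝ) ≤ 2), div_inv_eq_mul]
    have hr1 : R ^ α * ((R / 2) ^ (-α)) ^ 2 = (2:ℝ) ^ (2 * α) * R ^ (-α) := by
      have hA1 : R ^ α * (R ^ (-α) * R ^ (-α)) = R ^ (-α) := by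
        rw [← Real.rpow_add hRpos, ← Real.rpow_add hRpos]
        congr 1
        ring
      have hA2 : (2:ℝ) ^ α * (2:ℝ) ^ α = (2:ℝ) ^ (2 * α) := by
        rw [← Real.rpow_add (by norm_num : (0:ℝ) < 2), two_mul]
      calc R ^ α * ((R / 2) ^ (-α)) ^ 2
          = (R ^ α * (R ^ (-α) * R ^ (-α))) * ((2:ℝ) ^ α * (2:ℝ) ^ α) := by rw [e1]; ring
        _ = R ^ (-α) * (2:ℝ) ^ (2 * α) := by rw [hA1, hA2]
        _ = (2:ℝ) ^ (2 * α) * R ^ (-α) := by ring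
    have hsq : ((R - 2 * ρ) ^ (-α)) ^ 2 ≤ ((R / 2) ^ (-α)) ^ 2 := by
      have h := Real.rpow_le_rpow_of_nonpos (by linarith : (0:ℝ) < R / 2) hhalf
        (neg_nonpos.mpr hα.le)
      exact pow_le_pow_left₀ (Real.rpow_nonneg hsub.le _) h 2
    have hRαnn : (0:ℝ) ≤ R ^ α := Real.rpow_nonneg hRpos.le _
    calc R ^ α * Real.exp (2 * R * k) *
        |∫ x in closedBall (0 : EuclideanSpace ℝ (Fin N)) (2 * ρ),
          auxG lam w ξ (R • y) (R • x₀) x|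
        ≤ R ^ α * Real.exp (2 * R * k) * (K * B ^ 2 * V) := by
          apply mul_le_mul_of_nonneg_left hIbound (by positivity)
      _ = V * K * σ ^ 2 * (Real.exp (2 * R * k) * (Real.exp (-(k * (R - 2 * ρ)))) ^ 2) *
          (R ^ α * ((R - 2 * ρ) ^ (-α)) ^ 2) := by rw [hBdef]; ring
      _ = V * K * σ ^ 2 * Real.exp (4 * k * ρ) * (R ^ α * ((R - 2 * ρ) ^ (-α)) ^ 2) := by
          rw [hexp]
      _ ≤ V * K * σ ^ 2 * Real.exp (4 * k * ρ) * (R ^ α * ((R / 2) ^ (-α)) ^ 2) := by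
          apply mul_le_mul_of_nonneg_left (mul_le_mul_of_nonneg_left hsq hRαnn) (by positivity)
      _ = V * K * σ ^ 2 * Real.exp (4 * k * ρ) * ((2:ℝ) ^ (2 * α) * R ^ (-α)) := by rw [hr1]
      _ = Cst * R ^ (-α) := by rw [hCstdef]; ring
  · simpa using (tendsto_rpow_neg_atTop hα).const_mul Cst
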